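/- Let Ψ(λ) = A·Φ(λ)/((λ+μ₁)(λ+μ₁+ν₁)) + B·Φ(λ)/((λ+μ₂)(λ+μ₂+ν₂)) for complex λ, where A, B ≥ 0, μ₁, μ₂, ν₁, ν₂ > 0, and Φ satisfies |Φ(λ)| ≤ Φ(Re λ) with Φ real-valued, nonnegative, and antitone on [0,∞). If Ψ(0) < 1, then every complex root λ of Ψ(λ) = 1 satisfies Re(λ) < 0. -/

import Mathlib

/-- if Ψ(0) < 1, every complex root of Ψ(λ) = 1 has Re(λ) < 0. -/
theorem stmt_11 (A B μ₁ μ₂ ν₁ ν₂ : ℝ) (hA : 0 ≤ A) (hB : 0 ≤ B)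
    (hμ₁ : 0 < μ₁) (hμ₂ : 0 < μ₂) (hν₁ : 0 < ν₁) (hν₂ : 0 < ν₂)
    (Φc : ℂ → ℂ) (Φ : ℝ → ℝ)
    (hΦnonneg : ∀ l ∈ Set.Ici (0 : ℝ), 0 ≤ Φ l)
    (hΦanti : AntitoneOn Φ (Set.Ici 0))
    (hΦbound : ∀ z : ℂ, ‖Φc z‖ ≤ Φ z.re)
    (Ψc : ℂ → ℂ)
    (hΨc : ∀ z : ℂ, Ψc z =
      (A : ℂ) * Φc z / ((z + (μ₁ : ℂ)) * (z + (μ₁ : ℂ) + (ν₁ : ℂ))) +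
      (B : ℂ) * Φc z / ((z + (μ₂ : ℂ)) * (z + (μ₂ : ℂ) + (ν₂ : ℂ))))
    (hΨ0 : A * Φ 0 / (μ₁ * (μ₁ + ν₁)) + B * Φ 0 / (μ₂ * (μ₂ + ν₂)) < 1)
    (z : ℂ) (hroot : Ψc z = 1) :
    z.re < 0 := by
  by_contra h
  push_neg at h
  have hΦ0le : ‖Φc z‖ ≤ Φ 0 :=
    (hΦbound z).trans (hΦanti (Set.mem_Ici.mpr le_rfl) (Set.mem_Ici.mpr h) h)
  have key : ∀ (C μ ν : ℝ), 0 ≤ C → 0 < μ → 0 < ν →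
      ‖(C:ℂ) * Φc z / ((z + (μ:ℂ)) * (z + (μ:ℂ) + (ν:ℂ)))‖ ≤
        C * Φ 0 / (μ * (μ + ν)) := by
    intro C μ ν hC hμ hν
    have h1 : μ ≤ ‖z + (μ:ℂ)‖ := by
      have : μ ≤ (z + (μ:ℂ)).re := by simp; linarith
      exact this.trans (Complex.re_le_norm _)
    have h2 : μ + ν ≤ ‖z + (μ:ℂ) + (ν:ℂ)‖ := by
      have : μ + ν ≤ (z + (μ:ℂ) + (ν:ℂ)).re := by simp; linarith
      exact this.trans (Complex.re_le_norm _)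
    rw [norm_div, norm_mul, norm_mul, Complex.norm_real, Real.norm_eq_abs, abs_of_nonneg hC]
    apply div_le_div₀ (mul_nonneg hC (hΦnonneg 0 (Set.mem_Ici.mpr le_rfl)))
      (mul_le_mul_of_nonneg_left hΦ0le hC) (by positivity)
    exact mul_le_mul h1 h2 (by linarith) (by linarith [norm_nonneg (z + (μ:ℂ))])
  have h1 := key A μ₁ ν₁ hA hμ₁ hν₁
  have h2 := key B μ₂ ν₂ hB hμ₂ hν₂
  have habs : ‖Ψc z‖ = 1 := by rw [hroot]; simp
  rw [hΨc z] at habs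
  have := (norm_add_le _ _).trans (add_le_add h1 h2)
  rw [habs] at this
  linarith
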